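/- Gaussian CDF Lipschitz merging bound: Let μ, μ' ∈ ℝ and σ, σ' > 0, and let Φ be the standard Gaussian CDF with density φ. Then sup_{y∈ℝ} |Φ((y−μ')/σ') − Φ((y−μ)/σ)| ≤ (|μ'−μ| + √((μ'−μ)² + |log(σ/σ')|·|σ'²−σ²|)) / (σ+σ') ≤ 2|μ'−μ|/(σ+σ') + √(|log(σ/σ')|·|σ'²−σ²|)/(σ+σ'). -/

import Mathlib

/-- The standard Gaussian cumulative distribution function. -/
noncomputable def stdGaussianCDF (x : ℝ) : ℝ :=
  ∫ t in Set.Iic x, Real.exp (-t ^ 2 / 2) / Real.sqrt (2 * Real.pi)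

open MeasureTheory Set Real

noncomputable def gPDF (t : ℝ) : ℝ := Real.exp (-t ^ 2 / 2) / Real.sqrt (2 * Real.pi)

lemma gPDF_eq : gPDF = fun t => Real.exp (-(1/2) * t ^ 2) / Real.sqrt (2 * Real.pi) := by
  funext t
  rw [gPDF, show -t^2/2 = -(1/2)*t^2 by ring]

lemma integrable_gPDF : Integrable gPDF := by
  rw [gPDF_eq]
  exact (integrable_exp_neg_mul_sq (by norm_num : (0:ℝ) < 1/2)).div_const _

lemma sqrt_two_pi_pos : 0 < Real.sqrt (2 * Real.pi) :=
  Real.sqrt_pos.2 (by positivity)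

lemma gPDF_nonneg (t : ℝ) : 0 ≤ gPDF t :=
  div_nonneg (Real.exp_nonneg _) (Real.sqrt_nonneg _)

lemma gPDF_le (t : ℝ) : gPDF t ≤ (Real.sqrt (2 * Real.pi))⁻¹ := by
  rw [gPDF, div_eq_mul_inv]
  nlinarith [Real.exp_le_one_iff.2 (by nlinarith [sq_nonneg t] : -t^2/2 ≤ 0), sqrt_two_pi_pos,
    inv_pos.2 sqrt_two_pi_pos, Real.exp_pos (-t^2/2)]

lemma gPDF_total : ∫ t, gPDF t = 1 := by
  rw [gPDF_eq, MeasureTheory.integral_div, integral_gaussian,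
    show Real.pi / (1/2) = 2 * Real.pi by ring, div_self sqrt_two_pi_pos.ne']

lemma gPDF_half_Ioi : ∫ t in Ioi (0:ℝ), gPDF t = 1/2 := by
  rw [gPDF_eq, MeasureTheory.integral_div, integral_gaussian_Ioi,
    show Real.pi / (1/2) = 2 * Real.pi by ring, div_div, mul_comm 2 (Real.sqrt (2*Real.pi)), ← div_div, div_self sqrt_two_pi_pos.ne']

lemma cdf_eq (x : ℝ) : stdGaussianCDF x = ∫ t in Iic x, gPDF t := rfl

lemma cdf_diff {a b : ℝ} (hab : a ≤ b) :
    stdGaussianCDF b - stdGaussianCDF a = ∫ t in Ioc a b, gPDF t := by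
  rw [cdf_eq, cdf_eq,
    intervalIntegral.integral_Iic_sub_Iic integrable_gPDF.integrableOn integrable_gPDF.integrableOn,
    intervalIntegral.integral_of_le hab]

lemma cdf_mono : Monotone stdGaussianCDF := fun a b hab => by
  have h := cdf_diff hab
  have h2 : 0 ≤ ∫ t in Ioc a b, gPDF t :=
    setIntegral_nonneg measurableSet_Ioc fun t _ => gPDF_nonneg t
  linarith

lemma cdf_diff_le {a b C : ℝ} (hab : a ≤ b) (h : ∀ t ∈ Ioc a b, gPDF t ≤ C) :
    stdGaussianCDF b - stdGaussianCDF a ≤ (b - a) * C := by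
  rw [cdf_diff hab]
  calc ∫ t in Ioc a b, gPDF t ≤ ∫ _t in Ioc a b, C :=
        setIntegral_mono_on integrable_gPDF.integrableOn
          (integrableOn_const measure_Ioc_lt_top.ne) measurableSet_Ioc h
    _ = (b - a) * C := by
        rw [setIntegral_const, Real.volume_real_Ioc_of_le hab,
          smul_eq_mul]

lemma cdf_lipschitz (a b : ℝ) :
    |stdGaussianCDF a - stdGaussianCDF b| ≤ |a - b| * (Real.sqrt (2 * Real.pi))⁻¹ := by
  wlog hab : b ≤ a generalizing a b
  · rw [abs_sub_comm, abs_sub_comm a b]; exact this _ _ (le_of_not_ge hab)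
  rw [abs_of_nonneg (sub_nonneg.2 (cdf_mono hab)), abs_of_nonneg (sub_nonneg.2 hab)]
  exact cdf_diff_le hab fun t _ => gPDF_le t

lemma gPDF_neg (x : ℝ) : gPDF (-x) = gPDF x := by
  rw [gPDF, gPDF, neg_sq]

lemma cdf_reflect (a : ℝ) : stdGaussianCDF (-a) = 1 - stdGaussianCDF a := by
  have h1 : stdGaussianCDF (-a) = ∫ t in Ioi a, gPDF t := by
    rw [cdf_eq]
    have := integral_comp_neg_Iic (-a) gPDF
    simp only [gPDF_neg, neg_neg] at this
    exact this
  have h2 := intervalIntegral.integral_Iic_add_Ioi (b := a) (f := gPDF)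
    integrable_gPDF.integrableOn integrable_gPDF.integrableOn
  rw [gPDF_total] at h2
  rw [h1, ← cdf_eq] at *
  linarith

lemma t_exp_le {t : ℝ} (ht : 0 ≤ t) : t * Real.exp (-t^2/2) ≤ Real.exp (-(1:ℝ)/2) := by
  have h1 : t ≤ Real.exp ((t^2-1)/2) := by
    nlinarith [Real.add_one_le_exp ((t^2-1)/2), sq_nonneg (t-1)]
  calc t * Real.exp (-t^2/2) ≤ Real.exp ((t^2-1)/2) * Real.exp (-t^2/2) :=
        mul_le_mul_of_nonneg_right h1 (Real.exp_nonneg _)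
    _ = Real.exp (-(1:ℝ)/2) := by rw [← Real.exp_add]; ring_nf

set_option maxHeartbeats 1000000 in
lemma core {ρ : ℝ} (hρ : 1 ≤ ρ) {t : ℝ} (ht : 0 ≤ t) :
    stdGaussianCDF (ρ * t) - stdGaussianCDF t
      ≤ Real.sqrt (Real.log ρ * (ρ^2 - 1)) / (ρ + 1) := by
  have hρ0 : (0:ℝ) < ρ := lt_of_lt_of_le one_pos hρ
  have htρ : t ≤ ρ * t := le_mul_of_one_le_left ht hρ
  have hlog0 : 0 ≤ Real.log ρ := Real.log_nonneg hρ
  have hsq : (0:ℝ) ≤ ρ^2 - 1 := by nlinarith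
  set R := Real.sqrt (Real.log ρ * (ρ^2 - 1)) / (ρ + 1) with hR
  have hRnn : 0 ≤ R := by positivity
  rcases le_or_gt (1/2 : ℝ) R with hcase | hcase
  · calc stdGaussianCDF (ρ*t) - stdGaussianCDF t = ∫ s in Ioc t (ρ*t), gPDF s := cdf_diff htρ
      _ ≤ ∫ s in Ioi 0, gPDF s :=
          setIntegral_mono_set integrable_gPDF.integrableOn (ae_of_all _ gPDF_nonneg)
            (HasSubset.Subset.eventuallyLE (fun s hs => ht.trans_lt hs.1))
      _ = 1/2 := gPDF_half_Ioi
      _ ≤ R := hcase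
  · have hsqrtR : Real.sqrt (Real.log ρ * (ρ^2 - 1)) ^ 2 = Real.log ρ * (ρ^2 - 1) :=
      Real.sq_sqrt (mul_nonneg hlog0 hsq)
    have hR2 : Real.log ρ * (ρ^2-1) < (ρ+1)^2 / 4 := by
      have h1 : R^2 < (1/2)^2 := by nlinarith
      rw [hR, div_pow, hsqrtR] at h1
      have hp1 : (0:ℝ) < (ρ+1)^2 := by positivity
      rw [div_lt_iff₀ hp1] at h1
      nlinarith
    have hlow : ρ - 1 ≤ Real.log ρ * ρ := by
      have h2 := Real.one_sub_inv_le_log_of_pos hρ0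
      have h3 : (1 - ρ⁻¹) * ρ = ρ - 1 := by field_simp
      nlinarith
    have hρlt : ρ < 5/2 := by
      by_contra hcon
      push_neg at hcon
      have h9 : (ρ-1)*(ρ^2-1) ≤ Real.log ρ * ρ * (ρ^2-1) :=
        mul_le_mul_of_nonneg_right hlow hsq
      nlinarith [mul_nonneg hlog0 hsq, sq_nonneg (ρ-1), mul_pos hρ0 (by linarith : (0:ℝ) < ρ+1)]
    have h9 : (ρ-1)*(ρ^2-1) ≤ Real.log ρ * ρ * (ρ^2-1) :=
      mul_le_mul_of_nonneg_right hlow hsq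
    have h11 : (2/5)*((ρ-1)*(ρ^2-1)) ≤ Real.log ρ * (ρ^2-1) := by
      nlinarith [mul_nonneg (mul_nonneg hlog0 hsq) (by linarith : (0:ℝ) ≤ 5/2 - ρ)]
    -- pointwise density bound on the interval
    have h5 : ∀ s ∈ Ioc t (ρ*t), gPDF s ≤ gPDF t := by
      intro s hs
      rw [gPDF, gPDF]
      have hex : Real.exp (-s^2/2) ≤ Real.exp (-t^2/2) := by
        apply Real.exp_le_exp.2
        nlinarith [hs.1.le, ht]
      exact (div_le_div_iff_of_pos_right sqrt_two_pi_pos).2 hex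
    have h6 := cdf_diff_le htρ h5
    have h8 : (ρ-1) * (t * Real.exp (-t^2/2)) ≤ (ρ-1) * Real.exp (-(1:ℝ)/2) :=
      mul_le_mul_of_nonneg_left (t_exp_le ht) (by linarith)
    have hinv : (0:ℝ) ≤ (Real.sqrt (2*Real.pi))⁻¹ := by positivity
    have h7 : (ρ*t - t) * gPDF t ≤ (ρ-1) * Real.exp (-(1:ℝ)/2) * (Real.sqrt (2*Real.pi))⁻¹ := by
      rw [gPDF, div_eq_mul_inv, show ρ*t - t = (ρ-1)*t by ring]
      calc (ρ-1)*t * (Real.exp (-t^2/2) * (Real.sqrt (2*Real.pi))⁻¹)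
          = ((ρ-1) * (t * Real.exp (-t^2/2))) * (Real.sqrt (2*Real.pi))⁻¹ := by ring
        _ ≤ ((ρ-1) * Real.exp (-(1:ℝ)/2)) * (Real.sqrt (2*Real.pi))⁻¹ :=
            mul_le_mul_of_nonneg_right h8 hinv
    have hE : Real.exp (-(1:ℝ)/2) ^ 2 = (Real.exp 1)⁻¹ := by
      rw [sq, ← Real.exp_add, show (-(1:ℝ)/2) + (-(1:ℝ)/2) = -1 by norm_num, Real.exp_neg]
    have hI : ((Real.sqrt (2*Real.pi))⁻¹) ^ 2 = (2*Real.pi)⁻¹ := by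
      rw [← one_div, div_pow, one_pow, Real.sq_sqrt (by positivity : (0:ℝ) ≤ 2*Real.pi), one_div]
    have he1 : (2:ℝ) < Real.exp 1 := by linarith [Real.exp_one_gt_d9]
    have hπ : (3:ℝ) < Real.pi := Real.pi_gt_three
    have hfin : (ρ-1) * Real.exp (-(1:ℝ)/2) * (Real.sqrt (2*Real.pi))⁻¹ ≤ R := by
      rw [hR, le_div_iff₀ (by linarith : (0:ℝ) < ρ+1)]
      rw [show (ρ-1) * Real.exp (-(1:ℝ)/2) * (Real.sqrt (2*Real.pi))⁻¹ * (ρ+1)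
          = ((ρ-1)*(ρ+1)) * (Real.exp (-(1:ℝ)/2) * (Real.sqrt (2*Real.pi))⁻¹) by ring]
      apply Real.le_sqrt_of_sq_le
      have hx2 : (((ρ-1)*(ρ+1)) * (Real.exp (-(1:ℝ)/2) * (Real.sqrt (2*Real.pi))⁻¹))^2
          = (ρ-1)^2*(ρ+1)^2 * ((Real.exp 1)⁻¹ * (2*Real.pi)⁻¹) := by
        rw [← hE, ← hI]; ring
      rw [hx2]
      have hinv_le : (Real.exp 1)⁻¹ * (2*Real.pi)⁻¹ ≤ 1/12 := by
        rw [← mul_inv]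
        have h12 : (12:ℝ) ≤ Real.exp 1 * (2*Real.pi) := by nlinarith
        calc (Real.exp 1 * (2*Real.pi))⁻¹ ≤ (12:ℝ)⁻¹ := by
              apply inv_anti₀ (by norm_num) h12
          _ = 1/12 := by norm_num
      calc (ρ-1)^2*(ρ+1)^2 * ((Real.exp 1)⁻¹ * (2*Real.pi)⁻¹)
          ≤ (ρ-1)^2*(ρ+1)^2 * (1/12) := by
            apply mul_le_mul_of_nonneg_left hinv_le (by positivity)
        _ ≤ Real.log ρ * (ρ^2-1) := by nlinarith [h11, sq_nonneg (ρ-1)]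
    linarith

lemma core_neg {ρ : ℝ} (hρ : 1 ≤ ρ) {t : ℝ} (ht : t ≤ 0) :
    stdGaussianCDF t - stdGaussianCDF (ρ * t)
      ≤ Real.sqrt (Real.log ρ * (ρ^2 - 1)) / (ρ + 1) := by
  have h1 : stdGaussianCDF t = 1 - stdGaussianCDF (-t) := by
    rw [show t = -(-t) by ring, cdf_reflect, neg_neg]
  have h2 : stdGaussianCDF (ρ * t) = 1 - stdGaussianCDF (ρ * -t) := by
    rw [show ρ * t = -(ρ * -t) by ring, cdf_reflect]
  rw [h1, h2]
  have h3 := core hρ (neg_nonneg.2 ht)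
  linarith

lemma scale {σ σ' : ℝ} (hσ' : 0 < σ') (hle : σ' ≤ σ) (x : ℝ) :
    |stdGaussianCDF (x/σ') - stdGaussianCDF (x/σ)|
      ≤ Real.sqrt (Real.log (σ/σ') * (σ^2 - σ'^2)) / (σ + σ') := by
  have hσ : 0 < σ := lt_of_lt_of_le hσ' hle
  have hρ : 1 ≤ σ/σ' := (one_le_div hσ').2 hle
  have hx : x/σ' = (σ/σ') * (x/σ) := by field_simp
  have hA : 0 ≤ Real.log (σ/σ') * (σ^2 - σ'^2) :=
    mul_nonneg (Real.log_nonneg hρ) (by nlinarith)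
  have hRHS : Real.sqrt (Real.log (σ/σ') * ((σ/σ')^2 - 1)) / (σ/σ' + 1)
      = Real.sqrt (Real.log (σ/σ') * (σ^2 - σ'^2)) / (σ + σ') := by
    have h1 : Real.log (σ/σ') * ((σ/σ')^2 - 1)
        = (Real.log (σ/σ') * (σ^2 - σ'^2)) / σ'^2 := by
      field_simp
    rw [h1, Real.sqrt_div hA, Real.sqrt_sq hσ'.le, div_div,
      show σ' * (σ/σ' + 1) = σ + σ' by field_simp]
  rcases le_or_gt 0 x with hx0 | hx0
  · have ht : 0 ≤ x/σ := div_nonneg hx0 hσ.le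
    have hmono : stdGaussianCDF (x/σ) ≤ stdGaussianCDF (x/σ') := by
      apply cdf_mono
      rw [hx]
      exact le_mul_of_one_le_left ht hρ
    rw [abs_of_nonneg (sub_nonneg.2 hmono), hx, ← hRHS]
    exact core hρ ht
  · have ht : x/σ ≤ 0 := div_nonpos_of_nonpos_of_nonneg hx0.le hσ.le
    have hmono : stdGaussianCDF (x/σ') ≤ stdGaussianCDF (x/σ) := by
      apply cdf_mono
      rw [hx]
      nlinarith [mul_le_mul_of_nonpos_right (by linarith : (1:ℝ) ≤ σ/σ') ht]
    rw [abs_of_nonpos (sub_nonpos.2 hmono), neg_sub, hx, ← hRHS]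
    exact core_neg hρ ht

lemma key {μ μ' σ σ' : ℝ} (hσ' : 0 < σ') (hle : σ' ≤ σ) (y : ℝ) :
    |stdGaussianCDF ((y - μ') / σ') - stdGaussianCDF ((y - μ) / σ)|
      ≤ (|μ' - μ| + Real.sqrt ((μ' - μ)^2 + |Real.log (σ/σ')| * |σ'^2 - σ^2|)) / (σ + σ') := by
  have hσ : 0 < σ := lt_of_lt_of_le hσ' hle
  have hρ : 1 ≤ σ/σ' := (one_le_div hσ').2 hle
  have habs1 : |Real.log (σ/σ')| = Real.log (σ/σ') := abs_of_nonneg (Real.log_nonneg hρ)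
  have habs2 : |σ'^2 - σ^2| = σ^2 - σ'^2 := by
    rw [abs_sub_comm]; exact abs_of_nonneg (by nlinarith)
  have h2π : (2:ℝ) ≤ Real.sqrt (2*Real.pi) :=
    (Real.le_sqrt (by norm_num) (by positivity)).2 (by nlinarith [Real.pi_gt_three])
  have hterm2 : |stdGaussianCDF ((y-μ')/σ) - stdGaussianCDF ((y-μ)/σ)| ≤ |μ'-μ|/(σ+σ') := by
    calc |stdGaussianCDF ((y-μ')/σ) - stdGaussianCDF ((y-μ)/σ)|
        ≤ |(y-μ')/σ - (y-μ)/σ| * (Real.sqrt (2*Real.pi))⁻¹ := cdf_lipschitz _ _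
      _ = |μ'-μ|/σ * (Real.sqrt (2*Real.pi))⁻¹ := by
          rw [div_sub_div_same, show y-μ'-(y-μ) = -(μ'-μ) by ring, abs_div, abs_neg,
            abs_of_pos hσ]
      _ ≤ |μ'-μ|/σ * (1/2) := by
          apply mul_le_mul_of_nonneg_left _ (by positivity)
          calc (Real.sqrt (2*Real.pi))⁻¹ ≤ (2:ℝ)⁻¹ := inv_anti₀ (by norm_num) h2π
            _ = 1/2 := by norm_num
      _ = |μ'-μ|/(2*σ) := by ring
      _ ≤ |μ'-μ|/(σ+σ') := by gcongr <;> linarith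
  have hterm1 : |stdGaussianCDF ((y-μ')/σ') - stdGaussianCDF ((y-μ')/σ)|
      ≤ Real.sqrt ((μ'-μ)^2 + Real.log (σ/σ') * (σ^2 - σ'^2)) / (σ+σ') := by
    calc |stdGaussianCDF ((y-μ')/σ') - stdGaussianCDF ((y-μ')/σ)|
        ≤ Real.sqrt (Real.log (σ/σ') * (σ^2 - σ'^2)) / (σ+σ') := scale hσ' hle (y-μ')
      _ ≤ Real.sqrt ((μ'-μ)^2 + Real.log (σ/σ') * (σ^2 - σ'^2)) / (σ+σ') := by
          gcongr <;>
          nlinarith [sq_nonneg (μ'-μ), Real.log_nonneg hρ,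
            mul_nonneg (Real.log_nonneg hρ) (by nlinarith : (0:ℝ) ≤ σ^2 - σ'^2)]
  calc |stdGaussianCDF ((y-μ')/σ') - stdGaussianCDF ((y-μ)/σ)|
      ≤ |stdGaussianCDF ((y-μ')/σ') - stdGaussianCDF ((y-μ')/σ)|
        + |stdGaussianCDF ((y-μ')/σ) - stdGaussianCDF ((y-μ)/σ)| := abs_sub_le _ _ _
    _ ≤ Real.sqrt ((μ'-μ)^2 + Real.log (σ/σ') * (σ^2 - σ'^2)) / (σ+σ') + |μ'-μ|/(σ+σ') :=
        add_le_add hterm1 hterm2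
    _ = (|μ'-μ| + Real.sqrt ((μ'-μ)^2 + |Real.log (σ/σ')| * |σ'^2 - σ^2|)) / (σ+σ') := by
        rw [habs1, habs2, ← add_div, add_comm]

/-- Gaussian CDF Lipschitz merging bound: for `μ, μ' ∈ ℝ` and `σ, σ' > 0`,
`sup_y |Φ((y-μ')/σ') - Φ((y-μ)/σ)|` is bounded by
`(|μ'-μ| + √((μ'-μ)² + |log(σ/σ')|·|σ'²-σ²|))/(σ+σ')`, which in turn is at most
`2|μ'-μ|/(σ+σ') + √(|log(σ/σ')|·|σ'²-σ²|)/(σ+σ')`. -/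
theorem gaussian_cdf_merge (μ μ' σ σ' : ℝ) (hσ : 0 < σ) (hσ' : 0 < σ') :
    (∀ y : ℝ, |stdGaussianCDF ((y - μ') / σ') - stdGaussianCDF ((y - μ) / σ)|
      ≤ (|μ' - μ| + Real.sqrt ((μ' - μ) ^ 2 + |Real.log (σ / σ')| * |σ' ^ 2 - σ ^ 2|))
          / (σ + σ')) ∧
    (|μ' - μ| + Real.sqrt ((μ' - μ) ^ 2 + |Real.log (σ / σ')| * |σ' ^ 2 - σ ^ 2|))
        / (σ + σ')
      ≤ 2 * |μ' - μ| / (σ + σ')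
        + Real.sqrt (|Real.log (σ / σ')| * |σ' ^ 2 - σ ^ 2|) / (σ + σ') := by
  constructor
  · intro y
    rcases le_total σ' σ with hle | hle
    · exact key hσ' hle y
    · have h := key (μ := μ') (μ' := μ) (σ := σ') (σ' := σ) hσ hle y
      rw [abs_sub_comm]
      refine le_trans h (le_of_eq ?_)
      rw [show σ/σ' = (σ'/σ)⁻¹ by rw [inv_div], Real.log_inv, abs_neg,
        abs_sub_comm μ μ', show (μ - μ')^2 = (μ' - μ)^2 by ring,
        abs_sub_comm (σ^2) (σ'^2), add_comm σ' σ]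
  · set L := |Real.log (σ / σ')| * |σ' ^ 2 - σ ^ 2| with hL
    have hLnn : 0 ≤ L := by positivity
    have h1 : Real.sqrt ((μ' - μ)^2 + L) ≤ |μ' - μ| + Real.sqrt L := by
      rw [show |μ' - μ| + Real.sqrt L = Real.sqrt ((|μ' - μ| + Real.sqrt L)^2) from
        (Real.sqrt_sq (by positivity)).symm]
      apply Real.sqrt_le_sqrt
      nlinarith [Real.sq_sqrt hLnn, Real.sqrt_nonneg L, abs_nonneg (μ' - μ), sq_abs (μ' - μ)]
    calc (|μ' - μ| + Real.sqrt ((μ' - μ)^2 + L)) / (σ + σ')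
        ≤ (|μ' - μ| + (|μ' - μ| + Real.sqrt L)) / (σ + σ') := by gcongr
      _ = 2 * |μ' - μ| / (σ + σ') + Real.sqrt L / (σ + σ') := by ring
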